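/- Let n ≥ 4 and let g ∈ S_n be such that g has exactly one fixed point on Fin n and every other ⟨g⟩-orbit has the same length s (so s divides n−1). Then there exists a non-orientable complete map P of order n such that g*∘P∘(g*)⁻¹ = P. -/

import Mathlib

/-- The quadricells of the complete graph `K_n`: pairs `((i,j),ε)` with `i ≠ j`. -/
abbrev Quadricells (n : ℕ) := {x : (Fin n × Fin n) × Bool // x.1.1 ≠ x.1.2}

/-- Negation as a permutation of `Bool`. -/
def boolNeg : Equiv.Perm Bool :=
  ⟨Bool.not, Bool.not, fun b => by cases b <;> rfl, fun b => by cases b <;> rfl⟩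

/-- The involution `α ((i,j),ε) = ((i,j), ¬ε)`. -/
def mapAlpha (n : ℕ) : Equiv.Perm (Quadricells n) :=
  Equiv.Perm.subtypePerm (Equiv.prodCongr (Equiv.refl (Fin n × Fin n)) boolNeg)
    (fun _ => Iff.rfl)

/-- The involution `β ((i,j),ε) = ((j,i), ε)`. -/
def mapBeta (n : ℕ) : Equiv.Perm (Quadricells n) :=
  Equiv.Perm.subtypePerm (Equiv.prodCongr (Equiv.prodComm (Fin n) (Fin n)) (Equiv.refl Bool))
    (fun _ => ne_comm)

/-- The extended action of `g ∈ S_n` on quadricells: `g* ((i,j),ε) = ((g i, g j), ε)`. -/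
def gStar {n : ℕ} (g : Equiv.Perm (Fin n)) : Equiv.Perm (Quadricells n) :=
  Equiv.Perm.subtypePerm (Equiv.prodCongr (Equiv.prodCongr g g) (Equiv.refl Bool))
    (fun _ => g.injective.ne_iff)

/-- The cardinality of the `⟨P⟩`-orbit of `x`. -/
noncomputable def orbLen {X : Type*} (P : Equiv.Perm X) (x : X) : ℕ :=
  Set.ncard {y | ∃ m : ℤ, (P ^ m) x = y}

/-- A complete map of order `n`. -/
def IsCompleteMap {n : ℕ} (P : Equiv.Perm (Quadricells n)) : Prop :=
  (∀ x : Quadricells n, ((P x : (Fin n × Fin n) × Bool)).1.1 = (x : (Fin n × Fin n) × Bool).1.1) ∧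
  mapAlpha n * P * mapAlpha n = P⁻¹ ∧
  (∀ (x : Quadricells n) (m : ℤ), (P ^ m) x ≠ mapAlpha n x) ∧
  (∀ x : Quadricells n, orbLen P x = n - 1)

/-- A complete map is non-orientable when `⟨αβ, P⟩` is transitive on the quadricells. -/
def NonOrientable {n : ℕ} (P : Equiv.Perm (Quadricells n)) : Prop :=
  ∀ x y : Quadricells n, ∃ σ ∈ Subgroup.closure {mapAlpha n * mapBeta n, P}, σ x = y

/-- `τ` is an automorphism of the map `P`. -/
def IsMapAut {n : ℕ} (P τ : Equiv.Perm (Quadricells n)) : Prop :=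
  τ * mapAlpha n = mapAlpha n * τ ∧ τ * mapBeta n = mapBeta n * τ ∧ τ * P * τ⁻¹ = P

/-- Isomorphism of maps on the quadricells of `K_n`. -/
def MapIso {n : ℕ} (P Q : Equiv.Perm (Quadricells n)) : Prop :=
  ∃ τ : Equiv.Perm (Quadricells n),
    τ * mapAlpha n = mapAlpha n * τ ∧ τ * mapBeta n = mapBeta n * τ ∧ τ * P * τ⁻¹ = Q

/-- The setoid of maps (restricted by a property `Q`) under map isomorphism. -/
def mapSetoid (n : ℕ) (Q : Equiv.Perm (Quadricells n) → Prop) :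
    Setoid {P : Equiv.Perm (Quadricells n) // Q P} where
  r P₁ P₂ := MapIso P₁.val P₂.val
  iseqv := by
    constructor
    · intro P
      exact ⟨1, by simp, by simp, by simp⟩
    · rintro P Q ⟨τ, h1, h2, h3⟩
      refine ⟨τ⁻¹, (Commute.inv_left h1 : _), (Commute.inv_left h2 : _), ?_⟩
      rw [← h3]; group
    · rintro P Q R ⟨τ, h1, h2, h3⟩ ⟨σ, g1, g2, g3⟩
      refine ⟨σ * τ, (Commute.mul_left g1 h1 : _), (Commute.mul_left g2 h2 : _), ?_⟩
      rw [← g3, ← h3]; group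

section AuxProof

open Function Equiv

lemma mem_periodicPts_perm {X : Type*} [Finite X] (f : Equiv.Perm X) (x : X) :
    x ∈ periodicPts f := by
  refine ⟨orderOf f, orderOf_pos f, ?_⟩
  show f^[orderOf f] x = x
  rw [Equiv.Perm.iterate_eq_pow, pow_orderOf_eq_one]
  rfl

lemma orbLen_eq_minimalPeriod {X : Type*} [Finite X] (f : Equiv.Perm X) (x : X) :
    orbLen f x = Function.minimalPeriod f x := by
  classical
  set p := Function.minimalPeriod f x with hp
  have hpos : 0 < p := Function.minimalPeriod_pos_of_mem_periodicPts (mem_periodicPts_perm f x)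
  have hset : {y | ∃ m : ℤ, (f ^ m) x = y} = Set.range (fun m : Fin p => (f ^ (m : ℕ)) x) := by
    ext y
    constructor
    · rintro ⟨m, rfl⟩
      have h1 : f ^ m = f ^ (m % (orderOf f : ℤ)).toNat := by
        rw [← zpow_natCast, Int.toNat_of_nonneg (Int.emod_nonneg _ (by
          exact_mod_cast (orderOf_pos f).ne')), zpow_mod_orderOf]
      set a := (m % (orderOf f : ℤ)).toNat
      have h2 : (f ^ a) x = (f ^ (a % p)) x := by
        have h := Function.iterate_mod_minimalPeriod_eq (f := ⇑f) (x := x) (n := a)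
        rw [Equiv.Perm.iterate_eq_pow, Equiv.Perm.iterate_eq_pow] at h
        exact h.symm
      exact ⟨⟨a % p, Nat.mod_lt _ hpos⟩, by rw [h1, h2]⟩
    · rintro ⟨m, rfl⟩
      exact ⟨(m : ℕ), by rw [zpow_natCast]⟩
  have hinj : Function.Injective (fun m : Fin p => (f ^ (m : ℕ)) x) := by
    intro a b hab
    have := Function.iterate_injOn_Iio_minimalPeriod (f := ⇑f) (x := x)
      (a.2 : (a : ℕ) ∈ Set.Iio p) (b.2 : (b : ℕ) ∈ Set.Iio p)
      (by simpa [Equiv.Perm.iterate_eq_pow] using hab)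
    exact Fin.ext this
  rw [orbLen, hset, ← Set.image_univ, Set.ncard_image_of_injective _ hinj,
    Set.ncard_univ, Nat.card_eq_fintype_card, Fintype.card_fin]

open Fin.NatCast in
lemma addLeft_pow {M : ℕ} [NeZero M] (m : ℕ) (x : Fin M) :
    ((Equiv.addLeft (1 : Fin M)) ^ m) x = (m : Fin M) + x := by
  induction m with
  | zero => simp
  | succ m ih =>
    rw [pow_succ', Equiv.Perm.mul_apply, ih]
    show (1 : Fin M) + ((m : Fin M) + x) = ((m + 1 : ℕ) : Fin M) + x
    push_cast
    abel

open Fin.NatCast in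
lemma cyc_trans {α : Type*} {M : ℕ} [NeZero M] (p : α → Prop) [DecidablePred p]
    (f : Fin M ≃ {x // p x}) (x y : α) (hx : p x) (hy : p y) :
    ∃ m : ℤ, (((Equiv.addLeft (1 : Fin M)).extendDomain f) ^ m) x = y := by
  refine ⟨(((f.symm ⟨y, hy⟩ - f.symm ⟨x, hx⟩ : Fin M) : ℕ) : ℤ), ?_⟩
  rw [zpow_natCast, ← Equiv.Perm.extendDomain_pow]
  rw [Equiv.Perm.extendDomain_apply_subtype _ f hx]
  rw [addLeft_pow, Fin.cast_val_eq_self, sub_add_cancel]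
  simp


lemma exists_rho (n s : ℕ) (hn : 4 ≤ n) (g : Equiv.Perm (Fin n)) (i₀ : Fin n)
    (hfixg : g i₀ = i₀) (hs2 : 2 ≤ s)
    (hper : ∀ j : Fin n, j ≠ i₀ → Function.minimalPeriod g j = s) :
    ∃ ρ : Fin n → Equiv.Perm (Fin n),
      (∀ i, ρ i i = i) ∧
      (∀ i j j', j ≠ i → j' ≠ i → ∃ m : ℤ, ((ρ i) ^ m) j = j') ∧
      (∀ i, ρ (g i) = g * ρ i * g⁻¹) := by
  classical
  have hspos : 0 < s := by omega
  have hfix_pow : ∀ m : ℕ, (g ^ m) i₀ = i₀ := by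
    intro m
    induction m with
    | zero => rfl
    | succ m ih => rw [pow_succ, Equiv.Perm.mul_apply, hfixg, ih]
  have hgs : g ^ s = 1 := by
    refine Equiv.ext fun j => ?_
    by_cases hj : j = i₀
    · subst hj; rw [hfix_pow]; rfl

    · have h1 := Function.iterate_minimalPeriod (f := ⇑g) (x := j)
      rw [hper j hj, Equiv.Perm.iterate_eq_pow] at h1
      exact h1
  have hpowmod : ∀ m : ℕ, g ^ m = g ^ (m % s) := by
    intro m
    conv_lhs => rw [← Nat.div_add_mod m s]
    rw [pow_add, pow_mul, hgs, one_pow, one_mul]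
  have hdist : ∀ r : Fin n, r ≠ i₀ → ∀ a b : ℕ, a < s → b < s →
      (g ^ a) r = (g ^ b) r → a = b := by
    intro r hr a b ha hb hab
    have := Function.iterate_injOn_Iio_minimalPeriod (f := ⇑g) (x := r)
      (by rw [hper r hr]; exact ha) (by rw [hper r hr]; exact hb)
      (by simp only [Equiv.Perm.iterate_eq_pow]; exact hab)
    exact this
  -- orbit finset and representative
  set orbitF : Fin n → Finset (Fin n) :=
    fun j => Finset.image (fun m : Fin s => (g ^ (m : ℕ)) j) Finset.univ with horbitF
  have horb_ne : ∀ j, (orbitF j).Nonempty := by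
    intro j
    exact ⟨j, Finset.mem_image.2 ⟨⟨0, hspos⟩, Finset.mem_univ _, rfl⟩⟩
  have horb_g : ∀ j, orbitF (g j) = orbitF j := by
    intro j
    ext y
    simp only [horbitF, Finset.mem_image, Finset.mem_univ, true_and]
    constructor
    · rintro ⟨m, rfl⟩
      refine ⟨⟨((m : ℕ) + 1) % s, Nat.mod_lt _ hspos⟩, ?_⟩
      show (g ^ (((m : ℕ) + 1) % s)) j = (g ^ (m : ℕ)) (g j)
      rw [← hpowmod, pow_succ, Equiv.Perm.mul_apply]
    · rintro ⟨m, rfl⟩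
      refine ⟨⟨((m : ℕ) + s - 1) % s, Nat.mod_lt _ hspos⟩, ?_⟩
      show (g ^ (((m : ℕ) + s - 1) % s)) (g j) = (g ^ (m : ℕ)) j
      rw [← hpowmod]
      have h1 : (g ^ ((m : ℕ) + s)) j = (g ^ ((m : ℕ) + s - 1)) (g j) := by
        conv_lhs => rw [show (m : ℕ) + s = ((m : ℕ) + s - 1) + 1 by omega]
        rw [pow_succ, Equiv.Perm.mul_apply]
      rw [← h1, pow_add, hgs, mul_one]
  set rep : Fin n → Fin n := fun j => (orbitF j).min' (horb_ne j) with hrep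
  have hrep_g : ∀ j, rep (g j) = rep j := by
    intro j; simp only [hrep, horb_g]
  have hrep_pow : ∀ (m : ℕ) (j : Fin n), rep ((g ^ m) j) = rep j := by
    intro m
    induction m with
    | zero => intro j; rfl
    | succ m ih =>
      intro j
      rw [pow_succ', Equiv.Perm.mul_apply, hrep_g, ih]
  have hrep_mem : ∀ j, ∃ a : ℕ, a < s ∧ (g ^ a) j = rep j := by
    intro j
    have hmm : rep j ∈ Finset.image (fun m : Fin s => (g ^ (m : ℕ)) j) Finset.univ :=
      (orbitF j).min'_mem (horb_ne j)
    obtain ⟨a, _, ha⟩ := Finset.mem_image.1 hmm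
    exact ⟨(a : ℕ), a.2, ha⟩
  have hmem_exists : ∀ j, ∃ m : ℕ, m < s ∧ (g ^ m) (rep j) = j := by
    intro j
    obtain ⟨a, ha, haj⟩ := hrep_mem j
    rcases Nat.eq_zero_or_pos a with h0 | h0
    · subst h0
      exact ⟨0, hspos, by simpa using haj.symm⟩
    · refine ⟨s - a, by omega, ?_⟩
      rw [← haj, ← Equiv.Perm.mul_apply, ← pow_add]
      have : s - a + a = s := by omega
      rw [this, hgs]; rfl
  set mIdx : Fin n → ℕ := fun j => Classical.choose (hmem_exists j) with hmIdx
  have hmIdx_lt : ∀ j, mIdx j < s := fun j => (Classical.choose_spec (hmem_exists j)).1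
  have hmIdx_spec : ∀ j, (g ^ (mIdx j)) (rep j) = j :=
    fun j => (Classical.choose_spec (hmem_exists j)).2
  have hrep_ne : ∀ j, j ≠ i₀ → rep j ≠ i₀ := by
    intro j hj hcon
    apply hj
    rw [← hmIdx_spec j, hcon, hfix_pow]
  have hrep_fix : ∀ j, rep (rep j) = rep j := by
    intro j
    obtain ⟨a, _, ha⟩ := hrep_mem j
    conv_lhs => rw [← ha]
    rw [hrep_pow]
  have hmIdx_unique : ∀ j, j ≠ i₀ → ∀ m, m < s → (g ^ m) (rep j) = j → m = mIdx j := by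
    intro j hj m hm hmj
    exact hdist (rep j) (hrep_ne j hj) m (mIdx j) hm (hmIdx_lt j)
      (by rw [hmj, hmIdx_spec])
  -- the representatives finset
  set R : Finset (Fin n) := Finset.univ.filter (fun r => r ≠ i₀ ∧ rep r = r) with hR
  set k : ℕ := R.card with hk
  have hgpow_ne : ∀ (m : ℕ) (r : Fin n), r ≠ i₀ → (g ^ m) r ≠ i₀ := by
    intro m r hr hcon
    exact hr ((g ^ m).injective (by rw [hcon, hfix_pow]))
  -- the structural equivalence
  set Φ : {j : Fin n // j ≠ i₀} ≃ (Fin s × {r : Fin n // r ∈ R}) :=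
    { toFun := fun j => (⟨mIdx j.1, hmIdx_lt j.1⟩,
        ⟨rep j.1, by
          rw [hR, Finset.mem_filter]
          exact ⟨Finset.mem_univ _, hrep_ne j.1 j.2, hrep_fix j.1⟩⟩)
      invFun := fun x => ⟨(g ^ (x.1 : ℕ)) x.2.1, by
        have hx := (Finset.mem_filter.1 x.2.2).2.1
        exact hgpow_ne _ _ hx⟩
      left_inv := fun j => Subtype.ext (hmIdx_spec j.1)
      right_inv := by
        rintro ⟨m, r⟩
        have hr := Finset.mem_filter.1 r.2
        have h1 : rep ((g ^ (m : ℕ)) r.1) = r.1 := by rw [hrep_pow, hr.2.2]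
        have h2 : mIdx ((g ^ (m : ℕ)) r.1) = (m : ℕ) := by
          refine (hmIdx_unique ((g ^ (m : ℕ)) r.1) (hgpow_ne _ _ hr.2.1) (m : ℕ) m.2 ?_).symm
          rw [h1]
        refine Prod.ext (Fin.ext ?_) (Subtype.ext ?_) <;> simp [h1, h2] } with hΦ
  have cardk : s * k = n - 1 := by
    have h1 : Fintype.card {j : Fin n // j ≠ i₀} = n - 1 := by
      rw [Fintype.card_subtype_compl, Fintype.card_subtype_eq, Fintype.card_fin]
    have h2 : Fintype.card (Fin s × {r : Fin n // r ∈ R}) = s * k := by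
      rw [Fintype.card_prod, Fintype.card_fin, Fintype.card_coe]
    rw [← h2, ← h1]
    exact (Fintype.card_congr Φ).symm
  -- the global numbering equivalence
  haveI : NeZero (n - 1) := ⟨by omega⟩
  have hkpos : 0 < k := by
    rcases Nat.eq_zero_or_pos k with h | h
    · rw [h, Nat.mul_zero] at cardk; omega
    · exact h
  have hklt : k < n - 1 := by
    rw [← cardk]
    have : 1 * k < s * k := (Nat.mul_lt_mul_right hkpos).mpr (by omega)
    simpa using this
  set eR : {r : Fin n // r ∈ R} ≃ Fin k :=
    (Fintype.equivFin _).trans (finCongr (Fintype.card_coe R)) with heR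
  set E : {j : Fin n // j ≠ i₀} ≃ Fin (n - 1) :=
    Φ.trans (((Equiv.refl (Fin s)).prodCongr eR).trans
      (finProdFinEquiv.trans (finCongr cardk))) with hE
  have hEval : ∀ x : {j : Fin n // j ≠ i₀},
      ((E x : Fin (n - 1)) : ℕ) = ((eR (Φ x).2 : Fin k) : ℕ) + k * mIdx x.1 := fun x => rfl
  have hteR : ∀ x : {j : Fin n // j ≠ i₀}, ((eR (Φ x).2 : Fin k) : ℕ) < k := fun x => (eR (Φ x).2).2
  have harith : ∀ t m : ℕ, t < k → m < s →
      t + k * ((m + 1) % s) = (t + k * m + k) % (n - 1) := by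
    intro t m ht hm
    have hms : k * (m + 1) = k * m + k := by ring
    rcases Nat.lt_or_ge (m + 1) s with h | h
    · rw [Nat.mod_eq_of_lt h, eq_comm]
      have hlt : t + k * m + k < n - 1 := by rw [← cardk]; nlinarith
      rw [Nat.mod_eq_of_lt hlt]
      omega
    · have h' : m + 1 = s := by omega
      rw [h', Nat.mod_self]
      have e1 : s * k = k * m + k := by rw [← h']; ring
      have h2 : t + k * m + k = s * k + t := by omega
      have hts : t < s * k := by omega
      rw [Nat.mul_zero, Nat.add_zero, h2, ← cardk, Nat.add_mod_left, Nat.mod_eq_of_lt hts]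
  have Ekey : ∀ (x : {j : Fin n // j ≠ i₀}) (hgx : g x.1 ≠ i₀),
      E ⟨g x.1, hgx⟩ = E x + ⟨k, hklt⟩ := by
    intro x hgx
    have hrepeq : (Φ (⟨g x.1, hgx⟩ : {j : Fin n // j ≠ i₀})).2 = (Φ x).2 :=
      Subtype.ext (hrep_g x.1)
    have hmeq : mIdx (g x.1) = (mIdx x.1 + 1) % s := by
      refine (hmIdx_unique (g x.1) hgx _ (Nat.mod_lt _ hspos) ?_).symm
      rw [hrep_g x.1, ← hpowmod, pow_succ', Equiv.Perm.mul_apply, hmIdx_spec]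
    apply Fin.ext
    rw [Fin.add_def]
    show ((E ⟨g x.1, hgx⟩ : Fin (n - 1)) : ℕ) = (((E x : Fin (n - 1)) : ℕ) + k) % (n - 1)
    rw [hEval, hEval, hrepeq, hmeq]
    exact harith _ _ (hteR x) (hmIdx_lt x.1)
  -- the rotation at the fixed vertex
  set ρ₀ : Equiv.Perm (Fin n) := (Equiv.addLeft (1 : Fin (n - 1))).extendDomain E.symm with hρ₀
  have hρ₀fix : ρ₀ i₀ = i₀ :=
    Equiv.Perm.extendDomain_apply_not_subtype _ E.symm (by simp)
  have hρ₀trans : ∀ j j' : Fin n, j ≠ i₀ → j' ≠ i₀ → ∃ m : ℤ, (ρ₀ ^ m) j = j' :=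
    fun j j' hj hj' => cyc_trans _ E.symm j j' hj hj'
  have hρ₀apply : ∀ (j : Fin n) (hj : j ≠ i₀),
      ρ₀ j = (E.symm (1 + E ⟨j, hj⟩) : {x : Fin n // x ≠ i₀}).1 := by
    intro j hj
    rw [hρ₀, Equiv.Perm.extendDomain_apply_subtype _ E.symm hj]
    simp
  have hρ₀comm : ∀ x, ρ₀ (g x) = g (ρ₀ x) := by
    intro x
    by_cases hx : x = i₀
    · subst hx; rw [hfixg, hρ₀fix, hfixg]
    · have hgx : g x ≠ i₀ := fun hc => hx (g.injective (by rw [hc, hfixg]))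
      rw [hρ₀apply (g x) hgx, hρ₀apply x hx]
      set y : {j : Fin n // j ≠ i₀} := E.symm (1 + E ⟨x, hx⟩) with hy
      have hgy : g y.1 ≠ i₀ := fun hc => y.2 (g.injective (by rw [hc, hfixg]))
      have h2 : E ⟨g y.1, hgy⟩ = E y + ⟨k, hklt⟩ := Ekey y hgy
      have h3 : g y.1 = (E.symm (E y + ⟨k, hklt⟩) : {x : Fin n // x ≠ i₀}).1 := by
        rw [← h2, Equiv.symm_apply_apply]
      rw [h3, hy, Ekey ⟨x, hx⟩ hgx, Equiv.apply_symm_apply, add_assoc]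
  have hconjρ₀ : g * ρ₀ * g⁻¹ = ρ₀ := by
    refine Equiv.ext fun x => ?_
    rw [Equiv.Perm.mul_apply, Equiv.Perm.mul_apply, ← hρ₀comm, (Equiv.Perm.eq_inv_iff_eq.mp rfl)]
  -- rotations at other representatives
  have hswap : ∀ r a : Fin n, a ≠ r ↔ (Equiv.swap i₀ r) a ≠ i₀ := by
    intro r a
    rw [not_iff_not]
    constructor
    · rintro rfl; exact Equiv.swap_apply_right i₀ a
    · intro h
      have : Equiv.swap i₀ r a = Equiv.swap i₀ r r := by rw [h, Equiv.swap_apply_right]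
      exact (Equiv.swap i₀ r).injective this
  set fE : (r : Fin n) → (Fin (n - 1) ≃ {x : Fin n // x ≠ r}) := fun r =>
    E.symm.trans (Equiv.subtypeEquiv (Equiv.swap i₀ r) (hswap r)).symm with hfE
  set cyc : Fin n → Equiv.Perm (Fin n) := fun r =>
    (Equiv.addLeft (1 : Fin (n - 1))).extendDomain (fE r) with hcyc
  have hcyc_fix : ∀ r, cyc r r = r := fun r =>
    Equiv.Perm.extendDomain_apply_not_subtype _ (fE r) (by simp)
  have hcyc_trans : ∀ r j j' : Fin n, j ≠ r → j' ≠ r → ∃ m : ℤ, ((cyc r) ^ m) j = j' :=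
    fun r j j' hj hj' => cyc_trans _ (fE r) j j' hj hj'
  -- the full rotation system
  refine ⟨fun i => if i = i₀ then ρ₀ else (g ^ mIdx i) * cyc (rep i) * (g ^ mIdx i)⁻¹,
    ?_, ?_, ?_⟩
  · intro i
    beta_reduce
    by_cases hi : i = i₀
    · subst hi; rw [if_pos rfl]; exact hρ₀fix
    · rw [if_neg hi]
      have h1 : (g ^ mIdx i)⁻¹ i = rep i := by
        rw [Equiv.Perm.inv_eq_iff_eq]
        exact (hmIdx_spec i).symm
      rw [Equiv.Perm.mul_apply, Equiv.Perm.mul_apply, h1, hcyc_fix, hmIdx_spec]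
  · intro i j j' hj hj'
    beta_reduce
    by_cases hi : i = i₀
    · subst hi; rw [if_pos rfl]; exact hρ₀trans j j' hj hj'
    · rw [if_neg hi]
      set σ := g ^ mIdx i with hσ
      have hconj : ∀ m : ℤ, (σ * cyc (rep i) * σ⁻¹) ^ m = σ * (cyc (rep i)) ^ m * σ⁻¹ := by
        intro m
        have := map_zpow (MulAut.conj σ) (cyc (rep i)) m
        simpa [MulAut.conj_apply] using this.symm
      have hj2 : σ⁻¹ j ≠ rep i := by
        intro hc
        exact hj (by rw [← hmIdx_spec i, ← hσ, ← hc, (Equiv.Perm.eq_inv_iff_eq.mp rfl)])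
      have hj'2 : σ⁻¹ j' ≠ rep i := by
        intro hc
        exact hj' (by rw [← hmIdx_spec i, ← hσ, ← hc, (Equiv.Perm.eq_inv_iff_eq.mp rfl)])
      obtain ⟨m, hm⟩ := hcyc_trans (rep i) (σ⁻¹ j) (σ⁻¹ j') hj2 hj'2
      refine ⟨m, ?_⟩
      rw [hconj, Equiv.Perm.mul_apply, Equiv.Perm.mul_apply, hm, (Equiv.Perm.eq_inv_iff_eq.mp rfl)]
  · intro i
    beta_reduce
    by_cases hi : i = i₀
    · subst hi
      rw [hfixg, if_pos rfl]
      exact hconjρ₀.symm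
    · have hgi : g i ≠ i₀ := fun hc => hi (g.injective (by rw [hc, hfixg]))
      rw [if_neg hgi, if_neg hi]
      have hrepgi : rep (g i) = rep i := hrep_g i
      have hmgi : mIdx (g i) = (mIdx i + 1) % s := by
        refine (hmIdx_unique (g i) hgi _ (Nat.mod_lt _ hspos) ?_).symm
        rw [hrepgi, ← hpowmod, pow_succ', Equiv.Perm.mul_apply, hmIdx_spec]
      rw [hrepgi, hmgi, ← hpowmod]
      rw [pow_succ' g (mIdx i)]
      group

lemma build_P (n : ℕ) (hn : 4 ≤ n) (g : Equiv.Perm (Fin n)) (ρ : Fin n → Equiv.Perm (Fin n))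
    (hfixρ : ∀ i, ρ i i = i)
    (htrans : ∀ i j j', j ≠ i → j' ≠ i → ∃ m : ℤ, ((ρ i) ^ m) j = j')
    (hequiv : ∀ i, ρ (g i) = g * ρ i * g⁻¹) :
    ∃ P : Equiv.Perm (Quadricells n), IsCompleteMap P ∧ NonOrientable P ∧
      gStar g * P * (gStar g)⁻¹ = P := by
  classical
  set q : Fin n → Bool → Equiv.Perm (Fin n) := fun i ε => if ε then ρ i else (ρ i)⁻¹ with hq
  have hqfix : ∀ i ε, q i ε i = i := by
    intro i ε
    cases ε
    · show (ρ i)⁻¹ i = i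
      exact Equiv.Perm.inv_eq_iff_eq.mpr (hfixρ i).symm
    · exact hfixρ i
  have hqtrans : ∀ i ε j j', j ≠ i → j' ≠ i → ∃ m : ℤ, ((q i ε) ^ m) j = j' := by
    intro i ε j j' hj hj'
    obtain ⟨m, hm⟩ := htrans i j j' hj hj'
    cases ε
    · exact ⟨-m, by show (((ρ i)⁻¹) ^ (-m)) j = j'; rw [inv_zpow, zpow_neg, inv_inv]; exact hm⟩
    · exact ⟨m, hm⟩
  set F : Equiv.Perm ((Fin n × Fin n) × Bool) :=
    { toFun := fun x => ((x.1.1, q x.1.1 x.2 x.1.2), x.2)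
      invFun := fun x => ((x.1.1, (q x.1.1 x.2)⁻¹ x.1.2), x.2)
      left_inv := fun x => by simp
      right_inv := fun x => by simp } with hF
  have hFiff : ∀ x : (Fin n × Fin n) × Bool, x.1.1 ≠ x.1.2 ↔ (F x).1.1 ≠ (F x).1.2 := by
    rintro ⟨⟨i, j⟩, ε⟩
    show i ≠ j ↔ i ≠ q i ε j
    rw [not_iff_not]
    constructor
    · rintro rfl; exact (hqfix i ε).symm
    · intro h
      have h2 : q i ε j = q i ε i := by rw [hqfix, ← h]
      exact ((q i ε).injective h2).symm
  set P : Equiv.Perm (Quadricells n) := F.subtypePerm (fun x => (hFiff x).symm) with hP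
  have hPapp : ∀ x : Quadricells n,
      (P x).val = ((x.val.1.1, q x.val.1.1 x.val.2 x.val.1.2), x.val.2) := fun _ => rfl
  have hPinv : ∀ x : Quadricells n,
      (P⁻¹ x).val = ((x.val.1.1, (q x.val.1.1 x.val.2)⁻¹ x.val.1.2), x.val.2) := fun _ => rfl
  -- zpow formula
  have hPz : ∀ (m : ℤ) (x : Quadricells n),
      ((P ^ m) x).val = ((x.val.1.1, ((q x.val.1.1 x.val.2) ^ m) x.val.1.2), x.val.2) := by
    intro m
    induction m using Int.induction_on with
    | zero => intro x; simp
    | succ m ih =>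
      intro x
      have : P ^ ((m : ℤ) + 1) = P ^ (m : ℤ) * P := by rw [zpow_add_one]
      rw [this, Equiv.Perm.mul_apply, ih (P x), hPapp]
      have : (q x.val.1.1 x.val.2) ^ ((m : ℤ) + 1) = (q x.val.1.1 x.val.2) ^ (m : ℤ) * q x.val.1.1 x.val.2 := by
        rw [zpow_add_one]
      rw [this, Equiv.Perm.mul_apply]
    | pred m ih =>
      intro x
      have : P ^ (-(m : ℤ) - 1) = P ^ (-(m : ℤ)) * P⁻¹ := by rw [zpow_sub_one]
      rw [this, Equiv.Perm.mul_apply, ih (P⁻¹ x), hPinv]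
      have : (q x.val.1.1 x.val.2) ^ (-(m : ℤ) - 1)
          = (q x.val.1.1 x.val.2) ^ (-(m : ℤ)) * (q x.val.1.1 x.val.2)⁻¹ := by
        rw [zpow_sub_one]
      rw [this, Equiv.Perm.mul_apply]
  -- epsilon invariance
  have hPε : ∀ (m : ℤ) (x : Quadricells n), ((P ^ m) x).val.2 = x.val.2 := by
    intro m x; rw [hPz]
  -- orbit lengths
  have horb : ∀ x : Quadricells n, orbLen P x = n - 1 := by
    intro x
    obtain ⟨⟨⟨i, j⟩, ε⟩, hx⟩ := x
    have hx' : i ≠ j := hx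
    set x : Quadricells n := ⟨((i, j), ε), hx⟩ with hxdef
    have hqz_fix : ∀ m : ℤ, ((q i ε) ^ m) i = i := fun m =>
      Equiv.Perm.zpow_apply_eq_self_of_apply_eq_self (hqfix i ε) m
    set S : Set (Quadricells n) := {y | ∃ m : ℤ, (P ^ m) x = y} with hS
    have himg : (fun y : Quadricells n => y.val.1.2) '' S = {j' | ∃ m : ℤ, ((q i ε) ^ m) j = j'} := by
      ext j'
      constructor
      · rintro ⟨y, ⟨m, rfl⟩, rfl⟩
        exact ⟨m, by beta_reduce; rw [hPz]⟩
      · rintro ⟨m, rfl⟩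
        exact ⟨(P ^ m) x, ⟨m, rfl⟩, by beta_reduce; rw [hPz]⟩
    have hinj : Set.InjOn (fun y : Quadricells n => y.val.1.2) S := by
      rintro y ⟨a, rfl⟩ y' ⟨b, rfl⟩ hyy
      have h1 : (q i ε ^ a) j = (q i ε ^ b) j := by
        have h2 : ((P ^ a) x).val.1.2 = ((P ^ b) x).val.1.2 := hyy
        rw [hPz, hPz] at h2
        exact h2
      apply Subtype.ext
      calc ((P ^ a) x).val = ((i, (q i ε ^ a) j), ε) := hPz a x
        _ = ((i, (q i ε ^ b) j), ε) := by rw [h1]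
        _ = ((P ^ b) x).val := (hPz b x).symm
    have hqorb : {j' | ∃ m : ℤ, ((q i ε) ^ m) j = j'} = {j' : Fin n | j' ≠ i} := by
      ext j'
      constructor
      · rintro ⟨m, rfl⟩
        intro hc
        exact hx' (((q i ε) ^ m).injective (by rw [hc, hqz_fix])).symm
      · intro hj'
        exact hqtrans i ε j j' (Ne.symm hx') hj'
    have hcompl : ({j' : Fin n | j' ≠ i} : Set (Fin n)).ncard = n - 1 := by
      have he : ({j' : Fin n | j' ≠ i} : Set (Fin n)) = Set.univ \ {i} := by
        ext a; simp
      rw [he, Set.ncard_diff_singleton_of_mem (Set.mem_univ i), Set.ncard_univ,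
        Nat.card_eq_fintype_card, Fintype.card_fin]
    have := Set.ncard_image_of_injOn hinj
    rw [himg, hqorb, hcompl] at this
    exact this.symm
  refine ⟨P, ⟨fun x => rfl, ?_, ?_, horb⟩, ?_, ?_⟩
  -- alpha conjugation
  · refine Equiv.ext fun x => Subtype.ext ?_
    have h1 : (mapAlpha n x).val = (x.val.1, !x.val.2) := rfl
    show ((mapAlpha n) ((P) ((mapAlpha n) x))).val = (P⁻¹ x).val
    rw [hPinv]
    have h2 : ((mapAlpha n) ((P) ((mapAlpha n) x))).val
        = ((x.val.1.1, q x.val.1.1 (!x.val.2) x.val.1.2), !(!x.val.2)) := rfl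
    rw [h2, Bool.not_not]
    obtain ⟨⟨⟨i, j⟩, ε⟩, hx⟩ := x
    cases ε
    · show ((i, ρ i j), false) = ((i, ((ρ i)⁻¹)⁻¹ j), false)
      rw [inv_inv]
    · rfl
  -- no m with P^m x = alpha x
  · intro x m hc
    have := congrArg (fun y : Quadricells n => y.val.2) hc
    rw [hPε] at this
    have h1 : (mapAlpha n x).val.2 = !x.val.2 := rfl
    rw [h1] at this
    simp at this
  -- non-orientability
  · intro x y
    set H := Subgroup.closure {mapAlpha n * mapBeta n, P} with hH
    have hab_mem : mapAlpha n * mapBeta n ∈ H := Subgroup.subset_closure (by left; rfl)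
    have hP_mem : P ∈ H := Subgroup.subset_closure (by right; rfl)
    have habapp : ∀ z : Quadricells n,
        ((mapAlpha n * mapBeta n) z).val = ((z.val.1.2, z.val.1.1), !z.val.2) := fun _ => rfl
    have chain : ∀ (x : Quadricells n) (v w : (Fin n × Fin n) × Bool) (hv : v.1.1 ≠ v.1.2),
        (∃ σ ∈ H, (σ x).val = v) → (∃ σ ∈ H, (σ (⟨v, hv⟩ : Quadricells n)).val = w) →
        ∃ σ ∈ H, (σ x).val = w := by
      rintro x v w hv ⟨σ, hσH, hσ⟩ ⟨τ, hτH, hτ⟩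
      refine ⟨τ * σ, H.mul_mem hτH hσH, ?_⟩
      rw [Equiv.Perm.mul_apply, (Subtype.ext hσ : σ x = ⟨v, hv⟩)]
      exact hτ
    have move : ∀ (x : Quadricells n) (j' : Fin n), j' ≠ x.val.1.1 →
        ∃ σ ∈ H, (σ x).val = ((x.val.1.1, j'), x.val.2) := by
      intro x j' hj'
      obtain ⟨m, hm⟩ := hqtrans x.val.1.1 x.val.2 x.val.1.2 j' (Ne.symm x.prop) hj'
      exact ⟨P ^ m, H.zpow_mem hP_mem m, by rw [hPz, hm]⟩
    have swapv : ∀ x : Quadricells n,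
        ∃ σ ∈ H, (σ x).val = ((x.val.1.2, x.val.1.1), !x.val.2) :=
      fun x => ⟨mapAlpha n * mapBeta n, hab_mem, habapp x⟩
    have flip : ∀ x : Quadricells n,
        ∃ σ ∈ H, (σ x).val = ((x.val.1.1, x.val.1.2), !x.val.2) := by
      intro x
      obtain ⟨⟨⟨i, j⟩, ε⟩, hx⟩ := x
      have hij : i ≠ j := hx
      have hcex : (({i, j}ᶜ : Finset (Fin n))).Nonempty := by
        rw [← Finset.card_pos, Finset.card_compl]
        have h2 : ({i, j} : Finset (Fin n)).card ≤ 2 := by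
          refine le_trans (Finset.card_insert_le i {j}) ?_
          rw [Finset.card_singleton]
        rw [Fintype.card_fin]
        omega
      obtain ⟨c, hc⟩ := hcex
      rw [Finset.mem_compl, Finset.mem_insert, Finset.mem_singleton] at hc
      push_neg at hc
      obtain ⟨hci, hcj⟩ := hc
      -- ((i,j),ε) → ((j,i),!ε) → ((j,c),!ε) → ((c,j),ε) → ((c,i),ε) → ((i,c),!ε) → ((i,j),!ε)
      refine chain _ ((j, i), !ε) _ (Ne.symm hij) (swapv _) ?_
      refine chain _ ((j, c), !ε) _ (fun h => hcj h.symm) (move _ c hcj) ?_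
      refine chain _ ((c, j), !(!ε)) _ hcj (swapv _) ?_
      rw [Bool.not_not]
      refine chain _ ((c, i), ε) _ hci (move _ i (Ne.symm hci)) ?_
      refine chain _ ((i, c), !ε) _ (fun h => hci h.symm) (swapv _) ?_
      exact move _ j (Ne.symm hij)
    have samev : ∀ (x : Quadricells n) (j' : Fin n) (ε' : Bool), j' ≠ x.val.1.1 →
        ∃ σ ∈ H, (σ x).val = ((x.val.1.1, j'), ε') := by
      intro x j' ε' hj'
      by_cases hε : ε' = x.val.2
      · rw [hε]; exact move x j' hj'
      · have hε2 : ε' = !x.val.2 := by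
          cases hx2 : x.val.2 <;> rw [hx2] at hε <;> simp at hε <;> simp [hε]
        refine chain _ ((x.val.1.1, j'), x.val.2) _ (Ne.symm hj') (move x j' hj') ?_
        rw [hε2]
        exact flip _
    obtain ⟨⟨⟨i', j'⟩, ε'⟩, hy⟩ := y
    have hy' : i' ≠ j' := hy
    suffices h : ∃ σ ∈ H, (σ x).val = ((i', j'), ε') by
      obtain ⟨σ, hσH, hσ⟩ := h
      exact ⟨σ, hσH, Subtype.ext hσ⟩
    by_cases hi : i' = x.val.1.1
    · subst hi
      exact samev x j' ε' (Ne.symm hy')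
    · refine chain _ ((x.val.1.1, i'), x.val.2) _ (Ne.symm hi) (move x i' hi) ?_
      refine chain _ ((i', x.val.1.1), !x.val.2) _ hi (swapv _) ?_
      exact samev _ j' ε' (Ne.symm hy')
  -- gStar conjugation
  · have hqe : ∀ (i : Fin n) (ε : Bool), q i ε = g * q (g⁻¹ i) ε * g⁻¹ := by
      intro i ε
      have htrue : ρ i = g * ρ (g⁻¹ i) * g⁻¹ := by
        have := hequiv (g⁻¹ i)
        rw [(Equiv.Perm.eq_inv_iff_eq.mp rfl)] at this
        exact this
      cases ε
      · show (ρ i)⁻¹ = g * (ρ (g⁻¹ i))⁻¹ * g⁻¹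
        rw [htrue]
        simp [mul_inv_rev, mul_assoc]
      · exact htrue
    refine Equiv.ext fun x => Subtype.ext ?_
    show ((gStar g) ((P) ((gStar g)⁻¹ x))).val = (P x).val
    have h1 : ((gStar g)⁻¹ x).val = ((g⁻¹ x.val.1.1, g⁻¹ x.val.1.2), x.val.2) := rfl
    have h2 : ((gStar g) ((P) ((gStar g)⁻¹ x))).val
        = ((g (g⁻¹ x.val.1.1), g (q (g⁻¹ x.val.1.1) x.val.2 (g⁻¹ x.val.1.2))), x.val.2) := rfl
    rw [h2, hPapp, (Equiv.Perm.eq_inv_iff_eq.mp rfl)]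
    have h3 : g (q (g⁻¹ x.val.1.1) x.val.2 (g⁻¹ x.val.1.2)) = q x.val.1.1 x.val.2 x.val.1.2 := by
      rw [hqe x.val.1.1 x.val.2]
      rfl
    rw [h3]

end AuxProof

/-- If `g` has exactly one fixed point and all other `⟨g⟩`-orbits have the same length
`s`, `n ≥ 4`, then `g*` stabilizes some non-orientable complete map of order `n`. -/
theorem exists_nonorientable_fixed_one_fixed_point (n : ℕ) (hn : 4 ≤ n)
    (g : Equiv.Perm (Fin n)) (s : ℕ) (hfix : ∃! i : Fin n, g i = i)
    (hs : ∀ i : Fin n, g i ≠ i → orbLen g i = s) :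
    ∃ P : Equiv.Perm (Quadricells n), IsCompleteMap P ∧ NonOrientable P ∧
      gStar g * P * (gStar g)⁻¹ = P := by
  classical
  obtain ⟨i₀, hi₀, huniq⟩ := hfix
  obtain ⟨j₀, hj₀⟩ := Fintype.exists_ne_of_one_lt_card
    (by rw [Fintype.card_fin]; omega) i₀
  have hgj₀ : g j₀ ≠ j₀ := fun hc => hj₀ (huniq _ hc)
  have hL : ∀ j, g j ≠ j → Function.minimalPeriod (⇑g) j = s := fun j hj => by
    rw [← orbLen_eq_minimalPeriod]; exact hs j hj
  have hs2 : 2 ≤ s := by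
    rw [← hL j₀ hgj₀]
    have h0 : Function.minimalPeriod (⇑g) j₀ ≠ 0 :=
      (Function.minimalPeriod_pos_of_mem_periodicPts (mem_periodicPts_perm g j₀)).ne'
    have h1 : Function.minimalPeriod (⇑g) j₀ ≠ 1 := by
      intro hc
      have h2 := Function.iterate_minimalPeriod (f := ⇑g) (x := j₀)
      rw [hc] at h2
      simp only [Function.iterate_one] at h2
      exact hgj₀ h2
    omega
  have hper : ∀ j : Fin n, j ≠ i₀ → Function.minimalPeriod (⇑g) j = s := fun j hj =>
    hL j (fun hc => hj (huniq _ hc))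
  obtain ⟨ρ, h1, h2, h3⟩ := exists_rho n s hn g i₀ hi₀ hs2 hper
  exact build_P n hn g ρ h1 h2 h3
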